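/- arXiv:2304.08121 — 5 statements merged into one kernel-verified Lean document; each statement's English description precedes it below -/
import Mathlib

section
/- Let $\mathbb{F}_{q^s}$ be a finite field, $N > 1$ with $N-1 \mid q^s-1$, and let $X_N = \{(1,z) \mid z^N = z\} \cup \{(0,1)\} \subset \mathbb{F}_{q^s}^2$. Then the vanishing ideal $I(X_N) \subseteq \mathbb{F}_{q^s}[x_0, x_1]$ is generated by the three polynomials $x_0^2 - x_0$, $x_1^N - x_1$, and $(x_0 - 1)(x_1 - 1)$. -/
open MvPolynomial

/-- The set of points `X_N = {(1, z) | z ^ N = z} ∪ {(0, 1)}` in `F²`. -/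
def XNset (F : Type) [Field F] [Fintype F] [DecidableEq F] (N : ℕ) : Finset (F × F) :=
  insert ((0 : F), (1 : F))
    ((Finset.univ.filter (fun z : F => z ^ N = z)).image (fun z => ((1 : F), z)))

namespace VIXNaux

variable {F : Type} [Field F] {N : ℕ}

/-- The candidate ideal. -/
noncomputable def J (F : Type) [Field F] (N : ℕ) : Ideal (MvPolynomial (Fin 2) F) :=
  Ideal.span ({(X 0) ^ 2 - X 0, (X 1) ^ N - X 1, (X 0 - 1) * (X 1 - 1)} :
    Set (MvPolynomial (Fin 2) F))

/-- Embedding of one-variable polynomials via `x₁`. -/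
noncomputable def phi (F : Type) [Field F] : Polynomial F →ₐ[F] MvPolynomial (Fin 2) F :=
  Polynomial.aeval (X 1)

lemma g1_mem : (X 0) ^ 2 - X 0 ∈ J F N :=
  Ideal.subset_span (by simp)

lemma g2_mem : (X 1) ^ N - X 1 ∈ J F N :=
  Ideal.subset_span (by simp)

lemma g3_mem : (X 0 - 1) * (X 1 - 1) ∈ J F N :=
  Ideal.subset_span (by simp)

lemma mem1 (n : ℕ) : (X 0) * (X 1) ^ n - X 0 - (X 1) ^ n + 1 ∈ J F N := by
  induction n with
  | zero =>
      have : (X 0 : MvPolynomial (Fin 2) F) * (X 1) ^ 0 - X 0 - (X 1) ^ 0 + 1 = 0 := by ring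
      rw [this]; exact (J F N).zero_mem
  | succ n ih =>
      have : (X 0 : MvPolynomial (Fin 2) F) * (X 1) ^ (n + 1) - X 0 - (X 1) ^ (n + 1) + 1
          = X 1 * ((X 0) * (X 1) ^ n - X 0 - (X 1) ^ n + 1) + (X 0 - 1) * (X 1 - 1) := by ring
      rw [this]
      exact Ideal.add_mem _ (Ideal.mul_mem_left _ _ ih) g3_mem

lemma phi_C (a : F) : phi F (Polynomial.C a) = MvPolynomial.C a := by
  simp [phi, MvPolynomial.algebraMap_eq]

lemma mem2 (p : Polynomial F) :
    (X 0) * phi F p - (MvPolynomial.C (p.eval 1) * (X 0 - 1) + phi F p) ∈ J F N := by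
  induction p using Polynomial.induction_on' with
  | add p q hp hq =>
      have : (X 0) * phi F (p + q) -
          (MvPolynomial.C ((p + q).eval 1) * (X 0 - 1) + phi F (p + q)) =
          ((X 0) * phi F p - (MvPolynomial.C (p.eval 1) * (X 0 - 1) + phi F p)) +
          ((X 0) * phi F q - (MvPolynomial.C (q.eval 1) * (X 0 - 1) + phi F q)) := by
        rw [map_add, Polynomial.eval_add, map_add]; ring
      rw [this]; exact Ideal.add_mem _ hp hq
  | monomial n a =>
      have h1 : phi F (Polynomial.monomial n a) = MvPolynomial.C a * (X 1) ^ n := by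
        simp [phi, Polynomial.aeval_monomial, MvPolynomial.algebraMap_eq]
      have h2 : (Polynomial.monomial n a).eval (1 : F) = a := by
        simp
      have : (X 0) * phi F (Polynomial.monomial n a) -
          (MvPolynomial.C ((Polynomial.monomial n a).eval 1) * (X 0 - 1) +
            phi F (Polynomial.monomial n a)) =
          MvPolynomial.C a * ((X 0) * (X 1) ^ n - X 0 - (X 1) ^ n + 1) := by
        rw [h1, h2]; ring
      rw [this]
      exact Ideal.mul_mem_left _ _ (mem1 n)

lemma monic_g (hN : 1 < N) : (Polynomial.X ^ N - Polynomial.X : Polynomial F).Monic :=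
  Polynomial.monic_X_pow_sub (by simpa [Polynomial.degree_X] using (by exact_mod_cast hN : (1 : WithBot ℕ) < N))

lemma mod_reduce (hN : 1 < N) (p : Polynomial F) :
    phi F p - phi F (p %ₘ (Polynomial.X ^ N - Polynomial.X)) ∈ J F N := by
  have h := Polynomial.modByMonic_add_div p (Polynomial.X ^ N - Polynomial.X)
  have h2 : p - p %ₘ (Polynomial.X ^ N - Polynomial.X) =
      (Polynomial.X ^ N - Polynomial.X) * (p /ₘ (Polynomial.X ^ N - Polynomial.X)) := by
    rw [sub_eq_iff_eq_add, add_comm]; exact h.symm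
  rw [← map_sub, h2, map_mul]
  have h3 : phi F (Polynomial.X ^ N - Polynomial.X) = (X 1) ^ N - X 1 := by simp [phi]
  rw [h3]
  exact Ideal.mul_mem_right _ _ g2_mem

lemma reduce (hN : 1 < N) (f : MvPolynomial (Fin 2) F) :
    ∃ (b : F) (c : Polynomial F), c.natDegree < N ∧
      f - (MvPolynomial.C b * X 0 + phi F c) ∈ J F N := by
  induction f using MvPolynomial.induction_on with
  | C a =>
      refine ⟨0, Polynomial.C a, by simpa using hN.trans_le' (by simp), ?_⟩
      have : (MvPolynomial.C a : MvPolynomial (Fin 2) F) -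
          (MvPolynomial.C 0 * X 0 + phi F (Polynomial.C a)) = 0 := by
        rw [phi_C]; simp
      rw [this]; exact (J F N).zero_mem
  | add f g hf hg =>
      obtain ⟨b1, c1, hd1, hm1⟩ := hf
      obtain ⟨b2, c2, hd2, hm2⟩ := hg
      refine ⟨b1 + b2, c1 + c2, ?_, ?_⟩
      · exact lt_of_le_of_lt (Polynomial.natDegree_add_le _ _) (max_lt hd1 hd2)
      · have : f + g - (MvPolynomial.C (b1 + b2) * X 0 + phi F (c1 + c2)) =
            (f - (MvPolynomial.C b1 * X 0 + phi F c1)) +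
            (g - (MvPolynomial.C b2 * X 0 + phi F c2)) := by
          rw [map_add, map_add]; ring
        rw [this]; exact Ideal.add_mem _ hm1 hm2
  | mul_X f i hf =>
      obtain ⟨b, c, hd, hm⟩ := hf
      fin_cases i
      · -- multiply by X 0
        refine ⟨b + c.eval 1, c - Polynomial.C (c.eval 1), ?_, ?_⟩
        · exact lt_of_le_of_lt (Polynomial.natDegree_sub_le _ _)
            (max_lt hd (by simpa using hN.trans_le' (by simp)))
        · show f * X 0 - (MvPolynomial.C (b + c.eval 1) * X 0 +
              phi F (c - Polynomial.C (c.eval 1))) ∈ J F N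
          have h1 : phi F (c - Polynomial.C (c.eval 1)) =
              phi F c - MvPolynomial.C (c.eval 1) := by rw [map_sub, phi_C]
          have key : f * X 0 - (MvPolynomial.C (b + c.eval 1) * X 0 +
                phi F (c - Polynomial.C (c.eval 1))) =
              (f - (MvPolynomial.C b * X 0 + phi F c)) * X 0 +
              MvPolynomial.C b * ((X 0) ^ 2 - X 0) +
              ((X 0) * phi F c - (MvPolynomial.C (c.eval 1) * (X 0 - 1) + phi F c)) := by
            rw [h1, map_add]; ring
          rw [key]
          exact Ideal.add_mem _
            (Ideal.add_mem _ (Ideal.mul_mem_right _ _ hm) (Ideal.mul_mem_left _ _ g1_mem))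
            (mem2 c)
      · -- multiply by X 1
        set g : Polynomial F := Polynomial.X ^ N - Polynomial.X with hgdef
        set d : Polynomial F := c * Polynomial.X + Polynomial.C b * (Polynomial.X - 1) with hddef
        refine ⟨b, d %ₘ g, ?_, ?_⟩
        · have hgne : g ≠ 1 := by
            intro h
            have := congrArg Polynomial.natDegree h
            rw [FiniteField.X_pow_card_sub_X_natDegree_eq F hN, Polynomial.natDegree_one] at this
            omega
          have := Polynomial.natDegree_modByMonic_lt d (monic_g (F := F) hN) hgne
          rwa [FiniteField.X_pow_card_sub_X_natDegree_eq F hN] at this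
        · show f * X 1 - (MvPolynomial.C b * X 0 + phi F (d %ₘ g)) ∈ J F N
          have hphid : phi F d = phi F c * X 1 + MvPolynomial.C b * (X 1 - 1) := by
            rw [hddef, map_add, map_mul, map_mul, map_sub, phi_C]
            simp [phi]
          have key : f * X 1 - (MvPolynomial.C b * X 0 + phi F (d %ₘ g)) =
              (f - (MvPolynomial.C b * X 0 + phi F c)) * X 1 +
              MvPolynomial.C b * ((X 0) * (X 1) ^ 1 - X 0 - (X 1) ^ 1 + 1) +
              (phi F d - phi F (d %ₘ g)) := by
            rw [hphid]; ring
          rw [key]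
          exact Ideal.add_mem _
            (Ideal.add_mem _ (Ideal.mul_mem_right _ _ hm) (Ideal.mul_mem_left _ _ (mem1 1)))
            (mod_reduce hN d)

lemma eval_phi (v : Fin 2 → F) (c : Polynomial F) :
    MvPolynomial.eval v (phi F c) = c.eval (v 1) := by
  rw [phi, Polynomial.aeval_def, Polynomial.hom_eval₂]
  have h : (MvPolynomial.eval v).comp (algebraMap F (MvPolynomial (Fin 2) F))
      = RingHom.id F := RingHom.ext fun a => by simp
  rw [h, MvPolynomial.eval_X]
  rfl

lemma eval_J_zero {Ft : Type} [Field Ft] [Fintype Ft] [DecidableEq Ft] {N : ℕ}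
    (f : MvPolynomial (Fin 2) Ft) (hf : f ∈ J Ft N)
    (P : Ft × Ft) (hP : P ∈ XNset Ft N) :
    MvPolynomial.eval ![P.1, P.2] f = 0 := by
  have hP' : P = ((0 : Ft), (1 : Ft)) ∨ ∃ z : Ft, z ^ N = z ∧ ((1 : Ft), z) = P := by
    simpa [XNset] using hP
  have hle : J Ft N ≤ RingHom.ker (MvPolynomial.eval (R := Ft) ![P.1, P.2]) := by
    rw [J, Ideal.span_le]
    rintro g hg
    simp only [Set.mem_insert_iff, Set.mem_singleton_iff] at hg
    rcases hP' with rfl | ⟨z, hz, rfl⟩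
    · rcases hg with rfl | rfl | rfl <;> simp [RingHom.mem_ker]
    · rcases hg with rfl | rfl | rfl <;> simp [RingHom.mem_ker, hz]
  exact hle hf

end VIXNaux

open VIXNaux in
/-- The vanishing ideal of `X_N` is generated by
`x₀² - x₀`, `x₁^N - x₁` and `(x₀ - 1)(x₁ - 1)`. -/
theorem vanishing_ideal_XN (q s N : ℕ) (hq : 1 < q) (hs : 0 < s)
    (F : Type) [Field F] [Fintype F] [DecidableEq F]
    (hF : Fintype.card F = q ^ s) (hN : 1 < N) (hdvd : (N - 1) ∣ (q ^ s - 1))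
    (f : MvPolynomial (Fin 2) F) :
    (∀ P ∈ XNset F N, MvPolynomial.eval ![P.1, P.2] f = 0) ↔
      f ∈ Ideal.span
        ({(X 0) ^ 2 - X 0, (X 1) ^ N - X 1, (X 0 - 1) * (X 1 - 1)} :
          Set (MvPolynomial (Fin 2) F)) := by
  have hJ : Ideal.span
        ({(X 0) ^ 2 - X 0, (X 1) ^ N - X 1, (X 0 - 1) * (X 1 - 1)} :
          Set (MvPolynomial (Fin 2) F)) = J F N := rfl
  rw [hJ]
  constructor
  · intro hvan
    -- reduce f modulo J
    obtain ⟨b, c, hdeg, hmem⟩ := reduce hN f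
    -- the remainder also vanishes on X_N
    have hr : ∀ P ∈ XNset F N,
        MvPolynomial.eval ![P.1, P.2] (MvPolynomial.C b * X 0 + phi F c) = 0 := by
      intro P hP
      have h1 := eval_J_zero _ hmem P hP
      have h2 := hvan P hP
      rw [map_sub, h2, zero_sub, neg_eq_zero] at h1
      exact h1
    -- evaluate at the special point (0,1)
    have h01 : c.eval 1 = 0 := by
      have := hr ((0 : F), (1 : F)) (Finset.mem_insert_self _ _)
      simpa [eval_phi] using this
    -- evaluate at the points (1,z)
    have hz : ∀ z : F, z ^ N = z → b + c.eval z = 0 := by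
      intro z hzz
      have hmemP : ((1 : F), z) ∈ XNset F N := by
        refine Finset.mem_insert_of_mem ?_
        exact Finset.mem_image_of_mem _ (Finset.mem_filter.2 ⟨Finset.mem_univ _, hzz⟩)
      have := hr ((1 : F), z) hmemP
      simpa [eval_phi] using this
    -- count the roots of x^N = x
    have hN1 : 0 < N - 1 := by omega
    obtain ⟨g, hg⟩ := IsCyclic.exists_ofOrder_eq_natCard (α := Fˣ)
    have hcardU : Nat.card Fˣ = q ^ s - 1 := by
      rw [Nat.card_eq_fintype_card, Fintype.card_units, hF]
    have hq1 : 0 < q ^ s - 1 := by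
      have : 1 < q ^ s := by
        calc 1 < q := hq
        _ ≤ q ^ s := Nat.le_self_pow (by omega) q
      omega
    have hprim : IsPrimitiveRoot g (q ^ s - 1) := by
      rw [← hcardU, ← hg]; exact IsPrimitiveRoot.orderOf g
    have hfac : q ^ s - 1 = ((q ^ s - 1) / (N - 1)) * (N - 1) :=
      (Nat.div_mul_cancel hdvd).symm
    have hprim2 : IsPrimitiveRoot (g ^ ((q ^ s - 1) / (N - 1))) (N - 1) :=
      hprim.pow hq1 hfac
    have hprimF : IsPrimitiveRoot ((g ^ ((q ^ s - 1) / (N - 1)) : Fˣ) : F) (N - 1) :=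
      IsPrimitiveRoot.coe_units_iff.mpr hprim2
    have hcardroots : (Polynomial.nthRootsFinset (N - 1) (1 : F)).card = N - 1 :=
      hprimF.card_nthRootsFinset
    have hYeq : Finset.univ.filter (fun z : F => z ^ N = z) =
        insert (0 : F) (Polynomial.nthRootsFinset (N - 1) (1 : F)) := by
      ext z
      simp only [Finset.mem_filter, Finset.mem_univ, true_and, Finset.mem_insert,
        Polynomial.mem_nthRootsFinset hN1]
      constructor
      · intro h
        rcases eq_or_ne z 0 with rfl | hz0
        · exact Or.inl rfl
        · right
          have h2 : z ^ (N - 1) * z = 1 * z := by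
            rw [one_mul, ← pow_succ, Nat.sub_add_cancel hN.le]; exact h
          exact mul_right_cancel₀ hz0 h2
      · rintro (rfl | h)
        · simp [zero_pow (show N ≠ 0 by omega)]
        · calc z ^ N = z ^ (N - 1) * z := by rw [← pow_succ, Nat.sub_add_cancel hN.le]
          _ = z := by rw [h, one_mul]
    have hYcard : (Finset.univ.filter (fun z : F => z ^ N = z)).card = N := by
      rw [hYeq, Finset.card_insert_of_notMem, hcardroots]
      · omega
      · intro h0
        have := (Polynomial.mem_nthRootsFinset hN1 (1 : F)).mp h0
        rw [zero_pow (show N - 1 ≠ 0 by omega)] at this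
        exact zero_ne_one this
    -- the polynomial C b + c vanishes on all N roots and has degree < N, hence = 0
    have hp0 : (Polynomial.C b + c : Polynomial F) = 0 := by
      apply Polynomial.eq_zero_of_natDegree_lt_card_of_eval_eq_zero' _
        (Finset.univ.filter (fun z : F => z ^ N = z))
      · intro z hzmem
        have hzz : z ^ N = z := (Finset.mem_filter.1 hzmem).2
        simpa using hz z hzz
      · rw [hYcard]
        exact lt_of_le_of_lt (Polynomial.natDegree_add_le _ _)
          (max_lt (by simpa using hN.trans_le' (by simp)) hdeg)
    have hb : b = 0 := by
      have := congrArg (Polynomial.eval (1 : F)) hp0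
      simpa [h01] using this
    have hc : c = 0 := by
      rw [hb, map_zero, zero_add] at hp0
      exact hp0
    rw [hb, hc] at hmem
    simpa using hmem
  · intro hmem P hP
    exact eval_J_zero f hmem P hP
end

section
/- Let $\mathbb{F}_{q^s}$ be a finite field, $N > 1$ with $N-1 \mid q^s-1$. In the quotient ring $\mathbb{F}_{q^s}[x_0,x_1]/I(X_N)$, for every $d$ with $1 \leq d \leq N$, the classes of the monomials $x_1^d, x_0, x_0 x_1, x_0 x_1^2, \dots, x_0 x_1^{d-1}$ are linearly independent over $\mathbb{F}_{q^s}$. Moreover, for $d = N$ this set of $N+1$ classes is a basis of $\mathbb{F}_{q^s}[x_0,x_1]/I(X_N)$. -/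
/-- The family of evaluation vectors of the monomials `x₁^d, x₀, x₀x₁, …, x₀x₁^{d-1}`
over the points of `X_N`. -/
def monFam (F : Type) [Field F] [Fintype F] [DecidableEq F] (N d : ℕ) :
    Fin (d + 1) → (↥(XNset F N) → F) :=
  fun i P => if (i : ℕ) = 0 then (P : F × F).2 ^ d
    else (P : F × F).1 * (P : F × F).2 ^ ((i : ℕ) - 1)

open Polynomial in
lemma card_filter_pow_eq (F : Type) [Field F] [Fintype F] [DecidableEq F] (N : ℕ)
    (hN : 1 < N) (hdvd : (N - 1) ∣ (Fintype.card F - 1)) :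
    (Finset.univ.filter (fun z : F => z ^ N = z)).card = N := by
  -- get a primitive (N-1)-th root of unity
  obtain ⟨g, hg⟩ := IsCyclic.exists_ofOrder_eq_natCard (α := Fˣ)
  have hcard : Nat.card Fˣ = Fintype.card F - 1 := by
    simp [Nat.card_eq_fintype_card, Fintype.card_units]
  have hdvd' : (N - 1) ∣ orderOf g := by rw [hg, hcard]; exact hdvd
  have hg0 : orderOf g ≠ 0 := by
    rw [hg]; exact Nat.card_pos.ne'
  have hord : orderOf (g ^ (orderOf g / (N - 1))) = N - 1 :=
    orderOf_pow_orderOf_div hg0 hdvd'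
  have hprim : IsPrimitiveRoot ((g ^ (orderOf g / (N - 1)) : Fˣ) : F) (N - 1) := by
    have h := IsPrimitiveRoot.orderOf (g ^ (orderOf g / (N - 1)))
    rw [hord] at h
    exact IsPrimitiveRoot.coe_units_iff.mpr h
  have hNpos : 0 < N - 1 := by omega
  have hset : (Finset.univ.filter (fun z : F => z ^ N = z))
      = insert (0 : F) (Polynomial.nthRootsFinset (N - 1) (1 : F)) := by
    ext z
    simp only [Finset.mem_filter, Finset.mem_univ, true_and, Finset.mem_insert,
      Polynomial.mem_nthRootsFinset hNpos]
    constructor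
    · intro h
      rcases eq_or_ne z 0 with hz | hz
      · exact Or.inl hz
      · right
        have : z ^ (N - 1) * z = 1 * z := by
          rw [one_mul, ← pow_succ]
          have : N - 1 + 1 = N := by omega
          rw [this, h]
        exact mul_right_cancel₀ hz this
    · rintro (rfl | h)
      · simp [zero_pow (by omega : N ≠ 0)]
      · have : N - 1 + 1 = N := by omega
        rw [← this, pow_succ, h, one_mul]
  rw [hset, Finset.card_insert_of_notMem, hprim.card_nthRootsFinset]
  · omega
  · rw [Polynomial.mem_nthRootsFinset hNpos]
    simp [zero_pow (by omega : N - 1 ≠ 0)]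

/-- For `1 ≤ d ≤ N`, the evaluation vectors of
`x₁^d, x₀, x₀x₁, …, x₀x₁^{d-1}` at the points of `X_N` are linearly independent;
for `d = N` they form a basis of the space of functions on `X_N`
(equivalently, of `𝔽_{q^s}[x₀,x₁]/I(X_N)`). -/
theorem monomials_linearIndependent_XN (q s N : ℕ) (hq : 1 < q) (hs : 0 < s)
    (F : Type) [Field F] [Fintype F] [DecidableEq F]
    (hF : Fintype.card F = q ^ s) (hN : 1 < N) (hdvd : (N - 1) ∣ (q ^ s - 1))
    (d : ℕ) (hd1 : 1 ≤ d) (hdN : d ≤ N) :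
    LinearIndependent F (monFam F N d) ∧
      (d = N → Submodule.span F (Set.range (monFam F N d)) = ⊤) := by
  have hdvd' : (N - 1) ∣ (Fintype.card F - 1) := by rw [hF]; exact hdvd
  have hcardS := card_filter_pow_eq F N hN hdvd'
  -- membership facts
  have hmem0 : ((0 : F), (1 : F)) ∈ XNset F N := Finset.mem_insert_self _ _
  have hmemz : ∀ z : F, z ^ N = z → ((1 : F), z) ∈ XNset F N := by
    intro z hz
    exact Finset.mem_insert_of_mem (Finset.mem_image_of_mem _ (by simp [hz]))
  have hXcard : (XNset F N).card = N + 1 := by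
    rw [XNset, Finset.card_insert_of_notMem, Finset.card_image_of_injective _
      (fun a b h => by simpa using h), hcardS]
    simp
  have hli : LinearIndependent F (monFam F N d) := by
    rw [Fintype.linearIndependent_iff]
    intro g hg
    have hg0 : g 0 = 0 := by
      have := congr_fun hg ⟨_, hmem0⟩
      simp only [Finset.sum_apply, Pi.smul_apply, monFam, smul_eq_mul, Pi.zero_apply] at this
      rw [Fin.sum_univ_succ] at this
      simpa using this
    -- the polynomial with coefficients g (j+1)
    set p : Polynomial F := ∑ j : Fin d,
      Polynomial.C (g j.succ) * Polynomial.X ^ (j : ℕ) with hp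
    have hpeval : ∀ z ∈ Finset.univ.filter (fun z : F => z ^ N = z),
        p.eval z = 0 := by
      intro z hz
      rw [Finset.mem_filter] at hz
      have := congr_fun hg ⟨_, hmemz z hz.2⟩
      simp only [Finset.sum_apply, Pi.smul_apply, monFam, smul_eq_mul, Pi.zero_apply] at this
      rw [Fin.sum_univ_succ] at this
      simp only [Fin.val_zero, if_pos rfl, hg0, zero_mul, zero_add] at this
      rw [hp]
      simp only [Polynomial.eval_finset_sum, Polynomial.eval_mul, Polynomial.eval_C,
        Polynomial.eval_pow, Polynomial.eval_X]
      rw [← this]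
      apply Finset.sum_congr rfl
      intro j _
      have h1 : ((j.succ : Fin (d+1)) : ℕ) = (j : ℕ) + 1 := rfl
      rw [h1]
      simp
    have hpdeg : p.natDegree < (Finset.univ.filter (fun z : F => z ^ N = z)).card := by
      rw [hcardS]
      calc p.natDegree ≤ d - 1 := by
            apply Polynomial.natDegree_sum_le_of_forall_le
            intro j _
            refine le_trans (Polynomial.natDegree_C_mul_le _ _) ?_
            rw [Polynomial.natDegree_X_pow]
            have := j.isLt; omega
        _ < N := by omega
    have hp0 : p = 0 :=
      Polynomial.eq_zero_of_natDegree_lt_card_of_eval_eq_zero' p _ hpeval hpdeg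
    intro i
    rcases eq_or_ne (i : ℕ) 0 with hi | hi
    · rwa [show i = 0 from Fin.ext hi]
    · have hiv : (i : ℕ) - 1 < d := by have := i.isLt; omega
      have hcoeff : p.coeff ((i : ℕ) - 1) = g i := by
        rw [hp, Polynomial.finset_sum_coeff]
        rw [Finset.sum_eq_single (⟨(i : ℕ) - 1, hiv⟩ : Fin d)]
        · rw [Polynomial.coeff_C_mul, Polynomial.coeff_X_pow, if_pos rfl, mul_one]
          congr 1
          apply Fin.ext
          have h1 : ((Fin.succ (⟨(i : ℕ) - 1, hiv⟩ : Fin d)) : ℕ) = (i : ℕ) - 1 + 1 := rfl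
          rw [h1]; omega
        · intro b _ hb
          have : ¬ ((i : ℕ) - 1 = (b : ℕ)) := fun h => hb (Fin.ext (by simp [← h]))
          simp [Polynomial.coeff_C_mul, Polynomial.coeff_X_pow, this]
        · intro h
          exact absurd (Finset.mem_univ _) h
      rw [← hcoeff, hp0, Polynomial.coeff_zero]
  refine ⟨hli, fun hdeq => ?_⟩
  subst hdeq
  apply hli.span_eq_top_of_card_eq_finrank
  rw [Fintype.card_fin, Module.finrank_pi, Fintype.card_coe, hXcard]
end

section
/- Let $C \subseteq \mathbb{F}_{q^s}^n$ be a linear code over $\mathbb{F}_{q^s}$ and let $\mathrm{Tr}: \mathbb{F}_{q^s} \to \mathbb{F}_q$, $x \mapsto x + x^q + \cdots + x^{q^{s-1}}$, be the field trace, applied componentwise to vectors. Then the dual (over $\mathbb{F}_q$) of the subfield subcode equals the trace of the dual: $(C \cap \mathbb{F}_q^n)^\perp = \mathrm{Tr}(C^\perp)$, where the duals are taken with respect to the standard bilinear forms over $\mathbb{F}_q$ and $\mathbb{F}_{q^s}$ respectively. -/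
open Finset in
/-- Separation lemma: over a field, if `w` is not in a subspace `S` of `Fin n → F`,
there is a vector `u` dot-orthogonal to `S` but not to `w`. -/
lemma delsarte_sep {F : Type*} [Field F] {n : ℕ} (S : Submodule F (Fin n → F))
    {w : Fin n → F} (hw : w ∉ S) :
    ∃ u : Fin n → F, (∀ x ∈ S, ∑ i, x i * u i = 0) ∧ ∑ i, w i * u i ≠ 0 := by
  have hne : (Submodule.Quotient.mk w : (Fin n → F) ⧸ S) ≠ 0 := by
    simpa [Submodule.Quotient.mk_eq_zero] using hw
  obtain ⟨φ, hφ⟩ : ∃ φ : Module.Dual F ((Fin n → F) ⧸ S),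
      φ (Submodule.Quotient.mk w) ≠ 0 := by
    by_contra h
    push_neg at h
    exact hne ((Module.forall_dual_apply_eq_zero_iff F _).mp h)
  set f : (Fin n → F) →ₗ[F] F := φ.comp S.mkQ with hf
  have hfx : ∀ x : Fin n → F, f x = ∑ i, x i * f (Pi.single i 1) := by
    intro x
    have hx : x = ∑ i, x i • (Pi.single i 1 : Fin n → F) := by
      funext j
      simp [Finset.sum_apply, Pi.single_apply]
    conv_lhs => rw [hx]
    rw [map_sum]
    exact Finset.sum_congr rfl fun i _ => by rw [map_smul, smul_eq_mul]
  refine ⟨fun i => f (Pi.single i 1), ?_, ?_⟩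
  · intro x hx
    rw [← hfx]
    show φ (Submodule.Quotient.mk x) = 0
    rw [(Submodule.Quotient.mk_eq_zero S).mpr hx, map_zero]
  · rw [← hfx]
    exact hφ


/-- The subfield of elements fixed by `x ↦ x ^ q`. -/
def delsarteSubfield (q : ℕ) (L : Type) [Field L] (hq0 : q ≠ 0)
    (hadd : ∀ x y : L, (x + y) ^ q = x ^ q + y ^ q)
    (hneg : ∀ x : L, (-x) ^ q = -(x ^ q)) : Subfield L where
  carrier := {x : L | x ^ q = x}
  mul_mem' := fun {a b} ha hb => by
    simp only [Set.mem_setOf_eq] at *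
    rw [mul_pow, ha, hb]
  one_mem' := one_pow q
  add_mem' := fun {a b} ha hb => by
    simp only [Set.mem_setOf_eq] at *
    rw [hadd, ha, hb]
  zero_mem' := zero_pow hq0
  neg_mem' := fun {a} ha => by
    simp only [Set.mem_setOf_eq] at *
    rw [hneg, ha]
  inv_mem' := fun a ha => by
    simp only [Set.mem_setOf_eq] at *
    rw [inv_pow, ha]

set_option synthInstance.maxHeartbeats 1000000 in
set_option maxHeartbeats 2000000 in
/-- **Delsarte's theorem.** Over `L = 𝔽_{q^s}` with subfield
`𝔽_q = {x | x^q = x}`, the dual (over `𝔽_q`) of the subfield subcode of a linear code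
`C` equals the componentwise trace of the dual of `C`. -/
theorem delsarte (p m q s n : ℕ) (hp : p.Prime) (hq : q = p ^ m) (hm : 0 < m) (hs : 0 < s)
    (L : Type) [Field L] [Fintype L] (hchar : ringChar L = p)
    (hL : Fintype.card L = q ^ s) (C : Submodule L (Fin n → L)) :
    {w : Fin n → L | (∀ i, w i ^ q = w i) ∧
        ∀ v : Fin n → L, (v ∈ C ∧ ∀ i, v i ^ q = v i) → ∑ i, v i * w i = 0} =
      {w : Fin n → L | ∃ c : Fin n → L, (∀ v ∈ C, ∑ i, v i * c i = 0) ∧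
        ∀ i, w i = ∑ j ∈ Finset.range s, c i ^ q ^ j} := by
  classical
  haveI : CharP L p := hchar ▸ ringChar.charP L
  haveI : Fact p.Prime := ⟨hp⟩
  have hq2 : 1 < q := by
    subst hq; exact Nat.one_lt_pow hm.ne' hp.one_lt
  have hq0 : q ≠ 0 := by omega
  -- the `j`-th power of the `q`-Frobenius, as a ring hom
  have hψex : ∀ j : ℕ, ∃ ψ : L →+* L, ∀ x, ψ x = x ^ q ^ j := by
    intro j
    refine ⟨iterateFrobenius L p (m * j), fun x => ?_⟩
    rw [iterateFrobenius_def, hq, ← pow_mul]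
  choose ψ hψ using hψex
  set Tr : L → L := fun x => ∑ j ∈ Finset.range s, x ^ q ^ j with hTr
  have hpow_sum : ∀ (j : ℕ) (t : Finset (Fin n)) (f : Fin n → L),
      (∑ i ∈ t, f i) ^ q ^ j = ∑ i ∈ t, f i ^ q ^ j := by
    intro j t f
    rw [← hψ j, map_sum]
    exact Finset.sum_congr rfl fun i _ => hψ j (f i)
  have hcard : ∀ x : L, x ^ q ^ s = x := by
    intro x
    rw [← hL]; exact FiniteField.pow_card x
  have hfix : ∀ a : L, a ^ q = a → ∀ j, a ^ q ^ j = a := by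
    intro a ha j
    induction j with
    | zero => simp
    | succ j ih => rw [pow_succ, pow_mul, ih, ha]
  -- Tr lands in K
  have hTrK : ∀ x : L, (Tr x) ^ q = Tr x := by
    intro x
    have e1 : Tr x ^ q = ∑ j ∈ Finset.range s, x ^ q ^ (j + 1) := by
      rw [show Tr x ^ q = ψ 1 (Tr x) by rw [hψ, pow_one]]
      simp only [hTr]
      rw [map_sum]
      refine Finset.sum_congr rfl fun j _ => ?_
      rw [hψ, pow_one, ← pow_mul, ← pow_succ]
    have h2 : ∑ j ∈ Finset.range (s + 1), x ^ q ^ j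
        = (∑ j ∈ Finset.range s, x ^ q ^ (j + 1)) + x ^ q ^ 0 :=
      Finset.sum_range_succ' _ s
    have h3 : ∑ j ∈ Finset.range (s + 1), x ^ q ^ j
        = (∑ j ∈ Finset.range s, x ^ q ^ j) + x ^ q ^ s :=
      Finset.sum_range_succ _ s
    rw [h3, hcard, pow_zero, pow_one] at h2
    rw [e1]
    simp only [hTr]
    exact (add_right_cancel h2).symm
  -- trace linearity over K-vectors
  have hTrsum : ∀ (v c : Fin n → L), (∀ i, v i ^ q = v i) →
      ∑ i, v i * Tr (c i) = Tr (∑ i, v i * c i) := by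
    intro v c hv
    simp only [hTr]
    simp only [hpow_sum]
    rw [Finset.sum_comm]
    refine Finset.sum_congr rfl fun i _ => ?_
    rw [Finset.mul_sum]
    refine Finset.sum_congr rfl fun j _ => ?_
    rw [mul_pow, hfix (v i) (hv i) j]
  have hTr0 : Tr 0 = 0 := by
    simp [hTr, zero_pow (pow_ne_zero _ hq0)]
  -- Tr is not identically zero
  have hTrne : ∃ x : L, Tr x ≠ 0 := by
    by_contra h
    push_neg at h
    set P : Polynomial L := ∑ j ∈ Finset.range s, Polynomial.X ^ q ^ j with hP
    have hdeg : P.natDegree ≤ q ^ (s - 1) := by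
      apply Polynomial.natDegree_sum_le_of_forall_le
      intro j hj
      refine le_trans (Polynomial.natDegree_X_pow_le _) ?_
      exact Nat.pow_le_pow_right (by omega) (by
        have := Finset.mem_range.mp hj; omega)
    have heval : ∀ x : L, P.eval x = 0 := by
      intro x
      rw [hP, Polynomial.eval_finset_sum]
      simpa [hTr] using h x
    have hzero : P = 0 := by
      apply Polynomial.eq_zero_of_natDegree_lt_card_of_eval_eq_zero P
        Function.injective_id heval
      calc P.natDegree ≤ q ^ (s - 1) := hdeg
        _ < q ^ s := Nat.pow_lt_pow_right hq2 (by omega)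
        _ = Fintype.card L := hL.symm
    have hcoeff : P.coeff 1 = 1 := by
      rw [hP, Polynomial.finset_sum_coeff]
      rw [Finset.sum_eq_single_of_mem 0 (Finset.mem_range.mpr hs)]
      · simp
      · intro j hj hj0
        rw [Polynomial.coeff_X_pow]
        have h1 : 1 < q ^ j := Nat.one_lt_pow hj0 hq2
        have : ¬ (1 = q ^ j) := by omega
        simp [this]
    rw [hzero] at hcoeff
    simp at hcoeff
  -- the subfield K
  have haddq : ∀ x y : L, (x + y) ^ q = x ^ q + y ^ q := by
    intro x y
    have : (x + y) ^ q ^ 1 = x ^ q ^ 1 + y ^ q ^ 1 := by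
      rw [← hψ 1, map_add, hψ, hψ]
    simpa [pow_one] using this
  have hnegq : ∀ x : L, (-x) ^ q = -(x ^ q) := by
    intro x
    have : (-x) ^ q ^ 1 = -(x ^ q ^ 1) := by
      rw [← hψ 1, map_neg, hψ]
    simpa [pow_one] using this
  set K : Subfield L := delsarteSubfield q L hq0 haddq hnegq with hK
  have hKmem : ∀ x : L, x ∈ K ↔ x ^ q = x := fun x => Iff.rfl
  -- the trace of the dual code, as a K-subspace of K^n
  let S0 : Submodule K (Fin n → K) :=
    { carrier := {x | ∃ c : Fin n → L, (∀ v ∈ C, ∑ i, v i * c i = 0) ∧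
        ∀ i, (x i : L) = Tr (c i)}
      zero_mem' := ⟨0, by simp, fun i => by simpa using hTr0.symm⟩
      add_mem' := by
        rintro x y ⟨c, hc, hxc⟩ ⟨d, hd, hyd⟩
        refine ⟨c + d, fun v hv => ?_, fun i => ?_⟩
        · have : ∑ i, v i * (c + d) i = (∑ i, v i * c i) + ∑ i, v i * d i := by
            rw [← Finset.sum_add_distrib]
            exact Finset.sum_congr rfl fun i _ => by simp [mul_add]
          rw [this, hc v hv, hd v hv, add_zero]
        · have hadd : Tr (c i + d i) = Tr (c i) + Tr (d i) := by
            simp only [hTr]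
            rw [← Finset.sum_add_distrib]
            refine Finset.sum_congr rfl fun j _ => ?_
            rw [← hψ j, ← hψ j, ← hψ j, map_add]
          rw [Pi.add_apply, Pi.add_apply, hadd, ← hxc i, ← hyd i]
          push_cast
          ring
      smul_mem' := by
        rintro a x ⟨c, hc, hxc⟩
        refine ⟨fun i => (a : L) * c i, fun v hv => ?_, fun i => ?_⟩
        · have : ∑ i, v i * ((a : L) * c i) = (a : L) * ∑ i, v i * c i := by
            rw [Finset.mul_sum]
            exact Finset.sum_congr rfl fun i _ => by ring
          rw [this, hc v hv, mul_zero]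
        · have hmul : Tr ((a : L) * c i) = (a : L) * Tr (c i) := by
            simp only [hTr]
            rw [Finset.mul_sum]
            refine Finset.sum_congr rfl fun j _ => ?_
            rw [mul_pow, hfix (a : L) a.2 j]
          rw [Pi.smul_apply, smul_eq_mul, hmul]
          push_cast
          rw [hxc i] }
  apply Set.eq_of_subset_of_subset
  · -- hard direction
    intro w hw
    simp only [Set.mem_setOf_eq] at hw ⊢
    obtain ⟨hwK, hwperp⟩ := hw
    by_contra hnot
    set w' : Fin n → K := fun i => ⟨w i, hwK i⟩ with hw'
    have hw'S : w' ∉ S0 := by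
      rintro ⟨c, hc, hw'c⟩
      exact hnot ⟨c, hc, fun i => by simpa [hw'] using hw'c i⟩
    obtain ⟨u', hu'S, hu'w⟩ := delsarte_sep S0 hw'S
    set uL : Fin n → L := fun i => (u' i : L) with huL
    -- uL is orthogonal to all of C⊥
    have claimA : ∀ c : Fin n → L, (∀ v ∈ C, ∑ i, v i * c i = 0) →
        ∑ i, uL i * c i = 0 := by
      intro c hc
      set t : L := ∑ i, uL i * c i with ht
      by_contra htne
      obtain ⟨x0, hx0⟩ := hTrne
      have key : ∀ lam : L, Tr (lam * t) = 0 := by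
        intro lam
        have h1 : lam * t = ∑ i, uL i * (lam * c i) := by
          rw [ht, Finset.mul_sum]
          exact Finset.sum_congr rfl fun i _ => by ring
        have h2 : Tr (lam * t) = ∑ i, uL i * Tr (lam * c i) := by
          rw [h1, ← hTrsum uL (fun i => lam * c i) (fun i => (hKmem _).mp (u' i).2)]
        -- the vector (Tr (lam * c i)) lies in S0
        set x : Fin n → K := fun i => ⟨Tr (lam * c i), hTrK _⟩ with hx
        have hxS : x ∈ S0 := by
          refine ⟨fun i => lam * c i, fun v hv => ?_, fun i => rfl⟩
          have : ∑ i, v i * (lam * c i) = lam * ∑ i, v i * c i := by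
            rw [Finset.mul_sum]
            exact Finset.sum_congr rfl fun i _ => by ring
          rw [this, hc v hv, mul_zero]
        have hx0' : ∑ i, x i * u' i = 0 := hu'S x hxS
        have hcast : ((∑ i, x i * u' i : K) : L) = ∑ i, Tr (lam * c i) * uL i := by
          push_cast
          rfl
        rw [hx0'] at hcast
        rw [h2]
        rw [show ∑ i, uL i * Tr (lam * c i) = ∑ i, Tr (lam * c i) * uL i from
          Finset.sum_congr rfl fun i _ => mul_comm _ _]
        exact_mod_cast hcast.symm
      have := key (x0 * t⁻¹)
      rw [mul_assoc, inv_mul_cancel₀ htne, mul_one] at this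
      exact hx0 this
    -- uL ∈ C by separation over L
    have huC : uL ∈ C := by
      by_contra h
      obtain ⟨c, hcperp, hne⟩ := delsarte_sep C h
      have : ∀ v ∈ C, ∑ i, v i * c i = 0 := hcperp
      exact hne (claimA c this)
    have h0 : ∑ i, uL i * w i = 0 :=
      hwperp uL ⟨huC, fun i => (hKmem _).mp (u' i).2⟩
    have hne0 : ∑ i, uL i * w i ≠ 0 := by
      have hcast : ((∑ i, w' i * u' i : K) : L) = ∑ i, w i * uL i := by
        push_cast
        rfl
      rw [show ∑ i, uL i * w i = ∑ i, w i * uL i from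
        Finset.sum_congr rfl fun i _ => mul_comm _ _]
      rw [← hcast]
      exact_mod_cast hu'w
    exact hne0 h0
  · -- easy direction
    rintro w ⟨c, hcperp, hwc⟩
    have hwTr : ∀ i, w i = Tr (c i) := fun i => hwc i
    refine ⟨fun i => by rw [hwTr i]; exact hTrK _, ?_⟩
    rintro v ⟨hvC, hvK⟩
    have : ∑ i, v i * w i = ∑ i, v i * Tr (c i) :=
      Finset.sum_congr rfl fun i _ => by rw [hwTr i]
    rw [this, hTrsum v c hvK, hcperp v hvC, hTr0]
end

section
/- Let $\mathbb{F}_{q^s}$ be a finite field of characteristic $p$, and let $N > 1$ with $N - 1 \mid q^s - 1$ and $p \mid N$. For $0 \leq d \leq N-1$, let $\mathrm{PRS}(N, \Delta_d)$ be the linear code over $\mathbb{F}_{q^s}$ of length $N+1$ spanned by the evaluation vectors of the monomials $x_0^{d-i} x_1^i$, $0 \leq i \leq d$, at the points of $X_N = \{(1,z) \mid z^N = z\} \cup \{(0,1)\}$. Then $\mathrm{PRS}(N, \Delta_d)^\perp = \mathrm{PRS}(N, \Delta_{N-1-d})$, where the dual is with respect to the standard dot product on $\mathbb{F}_{q^s}^{N+1}$.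 -/
/-- The projective Reed-Solomon code `PRS(N, Δ_d)`: the span of the evaluation vectors of
the monomials `x₀^{d-i} x₁^i`, `0 ≤ i ≤ d`, at the points of `X_N`. -/
def PRS (F : Type) [Field F] [Fintype F] [DecidableEq F] (N d : ℕ) :
    Submodule F (↥(XNset F N) → F) :=
  Submodule.span F (Set.range (fun i : Fin (d + 1) => fun P : ↥(XNset F N) =>
    (P : F × F).1 ^ (d - (i : ℕ)) * (P : F × F).2 ^ (i : ℕ)))

section Aux

variable {F : Type} [Field F] [Fintype F] [DecidableEq F] {N : ℕ}

lemma PRSaux.not_mem_image_one (N : ℕ) :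
    ((0 : F), (1 : F)) ∉ (Finset.univ.filter (fun z : F => z ^ N = z)).image
      (fun z => ((1 : F), z)) := by
  simp only [Finset.mem_image, not_exists]
  rintro z ⟨-, h⟩
  exact one_ne_zero (congrArg Prod.fst h)

lemma PRSaux.zero_not_mem_nthRoots (hN : 1 < N) :
    (0 : F) ∉ Polynomial.nthRootsFinset (N - 1) (1 : F) := by
  rw [Polynomial.mem_nthRootsFinset (by omega : 0 < N - 1)]
  simp [zero_pow (by omega : N - 1 ≠ 0)]

lemma PRSaux.filter_pow_eq (hN : 1 < N) :
    Finset.univ.filter (fun z : F => z ^ N = z)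
      = insert (0 : F) (Polynomial.nthRootsFinset (N - 1) (1 : F)) := by
  have hN1 : 0 < N - 1 := by omega
  ext z
  simp only [Finset.mem_filter, Finset.mem_univ, true_and, Finset.mem_insert,
    Polynomial.mem_nthRootsFinset hN1]
  constructor
  · intro h
    rcases eq_or_ne z 0 with rfl | hz
    · exact Or.inl rfl
    · refine Or.inr (mul_right_cancel₀ hz ?_)
      rw [one_mul, ← pow_succ, (by omega : N - 1 + 1 = N), h]
  · rintro (rfl | h)
    · simp [zero_pow (by omega : N ≠ 0)]
    · calc z ^ N = z ^ (N - 1) * z := by rw [← pow_succ]; congr 1; omega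
        _ = z := by rw [h, one_mul]

lemma PRSaux.exists_prim {q s : ℕ} (hq : 1 < q) (hs : 0 < s)
    (hF : Fintype.card F = q ^ s) (hN : 1 < N) (hdvd : (N - 1) ∣ (q ^ s - 1)) :
    ∃ ζ : F, IsPrimitiveRoot ζ (N - 1) := by
  have hcard : Fintype.card Fˣ = q ^ s - 1 := by
    rw [Fintype.card_units, hF]
  obtain ⟨g, hg⟩ := IsCyclic.exists_generator (α := Fˣ)
  have hog : orderOf g = q ^ s - 1 := by
    rw [orderOf_eq_card_of_forall_mem_zpowers hg, Nat.card_eq_fintype_card, hcard]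
  have hm0 : 0 < q ^ s - 1 := by
    have : 1 < q ^ s := Nat.one_lt_pow (by omega) hq
    omega
  set k := (q ^ s - 1) / (N - 1) with hk
  have hkd : k ∣ q ^ s - 1 := Nat.div_dvd_of_dvd hdvd
  have horder : orderOf (g ^ k) = N - 1 := by
    rw [orderOf_pow, hog, Nat.gcd_eq_right hkd]
    exact Nat.div_div_self hdvd hm0.ne'
  refine ⟨((g ^ k : Fˣ) : F), ?_⟩
  rw [← horder]
  exact IsPrimitiveRoot.coe_units_iff.mpr (IsPrimitiveRoot.orderOf _)

lemma PRSaux.sum_nthRoots_pow {ζ : F} (hζ : IsPrimitiveRoot ζ (N - 1)) (hN : 1 < N)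
    {a : ℕ} (ha0 : 0 < a) (ha : a < N - 1) :
    ∑ z ∈ Polynomial.nthRootsFinset (N - 1) (1 : F), z ^ a = 0 := by
  have hN1 : 0 < N - 1 := by omega
  have hζ0 : ζ ≠ 0 := by
    intro h
    have := hζ.pow_eq_one
    rw [h, zero_pow hN1.ne'] at this
    exact zero_ne_one this
  set T := Polynomial.nthRootsFinset (N - 1) (1 : F) with hT
  have himg : T.image (fun z => ζ * z) = T := by
    ext x
    simp only [Finset.mem_image, hT, Polynomial.mem_nthRootsFinset hN1]
    constructor
    · rintro ⟨z, hz, rfl⟩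
      rw [mul_pow, hζ.pow_eq_one, hz, one_mul]
    · intro hx
      refine ⟨ζ⁻¹ * x, ?_, by field_simp⟩
      rw [mul_pow, inv_pow, hζ.pow_eq_one, inv_one, hx, one_mul]
  have hinj : Set.InjOn (fun z => ζ * z) T :=
    fun a _ b _ h => mul_left_cancel₀ hζ0 h
  have key : ∑ z ∈ T, z ^ a = ζ ^ a * ∑ z ∈ T, z ^ a := by
    conv_lhs => rw [← himg, Finset.sum_image hinj]
    simp [mul_pow, Finset.mul_sum]
  have : (ζ ^ a - 1) * ∑ z ∈ T, z ^ a = 0 := by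
    rw [sub_mul, one_mul, ← key, sub_self]
  rcases mul_eq_zero.mp this with h | h
  · exact absurd (sub_eq_zero.mp h) (hζ.pow_ne_one_of_pos_of_lt ha0.ne' ha)
  · exact h

lemma PRSaux.key_sum {p : ℕ} (hp : ringChar F = p) (hpN : p ∣ N) (hN : 1 < N)
    {ζ : F} (hζ : IsPrimitiveRoot ζ (N - 1)) {a : ℕ} (ha : a ≤ N - 1) :
    ∑ P ∈ XNset F N, P.1 ^ (N - 1 - a) * P.2 ^ a = 0 := by
  have hchar : CharP F p := hp ▸ ringChar.charP F
  have hNF : (N : F) = 0 := (CharP.cast_eq_zero_iff F p N).mpr hpN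
  have hinj : Set.InjOn (fun z : F => ((1 : F), z))
      (Finset.univ.filter (fun z : F => z ^ N = z)) :=
    fun a _ b _ h => congrArg Prod.snd h
  rw [XNset, Finset.sum_insert (PRSaux.not_mem_image_one N), Finset.sum_image hinj,
    PRSaux.filter_pow_eq hN, Finset.sum_insert (PRSaux.zero_not_mem_nthRoots hN)]
  simp only [one_pow, one_mul]
  have hcard : (Polynomial.nthRootsFinset (N - 1) (1 : F)).card = N - 1 :=
    hζ.card_nthRootsFinset
  rcases Nat.eq_zero_or_pos a with rfl | ha0
  · rw [zero_pow (by omega : N - 1 - 0 ≠ 0)]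
    simp only [pow_zero, Finset.sum_const, hcard, nsmul_eq_mul, mul_one]
    have : ((N - 1 : ℕ) : F) = (N : F) - 1 := by
      rw [Nat.cast_sub (by omega)]; simp
    rw [this, hNF]; ring
  rcases eq_or_lt_of_le ha with rfl | halt
  · rw [Nat.sub_self, pow_zero, one_mul, zero_pow ha0.ne',
      Finset.sum_congr rfl (fun z hz => by
        rw [(Polynomial.mem_nthRootsFinset (by omega : 0 < N - 1) (1 : F)).mp hz])]
    simp only [Finset.sum_const, hcard, nsmul_eq_mul, mul_one]
    have : ((N - 1 : ℕ) : F) = (N : F) - 1 := by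
      rw [Nat.cast_sub (by omega)]; simp
    rw [this, hNF]; ring
  · rw [zero_pow (by omega : N - 1 - a ≠ 0), zero_pow ha0.ne',
      PRSaux.sum_nthRoots_pow hζ hN ha0 halt]
    ring

lemma PRSaux.card_filter (hN : 1 < N) {ζ : F} (hζ : IsPrimitiveRoot ζ (N - 1)) :
    (Finset.univ.filter (fun z : F => z ^ N = z)).card = N := by
  rw [PRSaux.filter_pow_eq hN,
    Finset.card_insert_of_notMem (PRSaux.zero_not_mem_nthRoots hN),
    hζ.card_nthRootsFinset]
  omega

lemma PRSaux.card_XNset (hN : 1 < N) {ζ : F} (hζ : IsPrimitiveRoot ζ (N - 1)) :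
    (XNset F N).card = N + 1 := by
  rw [XNset, Finset.card_insert_of_notMem (PRSaux.not_mem_image_one N),
    Finset.card_image_of_injective _ (fun a b h => congrArg Prod.snd h),
    PRSaux.card_filter hN hζ]

lemma PRSaux.linearIndependent (hN : 1 < N) {ζ : F} (hζ : IsPrimitiveRoot ζ (N - 1))
    {e : ℕ} (he : e ≤ N - 1) :
    LinearIndependent F (fun i : Fin (e + 1) => fun P : ↥(XNset F N) =>
      (P : F × F).1 ^ (e - (i : ℕ)) * (P : F × F).2 ^ (i : ℕ)) := by
  rw [Fintype.linearIndependent_iff]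
  intro g hg i
  set f : Polynomial F := ∑ j : Fin (e + 1), Polynomial.C (g j) * Polynomial.X ^ (j : ℕ)
    with hf
  have hdeg : f.natDegree ≤ e := by
    apply Polynomial.natDegree_sum_le_of_forall_le
    intro j _
    exact (Polynomial.natDegree_C_mul_X_pow_le _ _).trans (by omega)
  have hzero : ∀ z ∈ Finset.univ.filter (fun z : F => z ^ N = z), f.eval z = 0 := by
    intro z hz
    have hmem : ((1 : F), z) ∈ XNset F N :=
      Finset.mem_insert_of_mem (Finset.mem_image_of_mem _ hz)
    have h2 := congrFun hg ⟨((1 : F), z), hmem⟩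
    simp only [Finset.sum_apply, Pi.smul_apply, smul_eq_mul, one_pow, one_mul,
      Pi.zero_apply] at h2
    simpa [hf, Polynomial.eval_finset_sum] using h2
  have hf0 : f = 0 := by
    apply Polynomial.eq_zero_of_natDegree_lt_card_of_eval_eq_zero' f _ hzero
    rw [PRSaux.card_filter hN hζ]
    omega
  have hco := congrArg (fun h => Polynomial.coeff h (i : ℕ)) hf0
  simp only [hf, Polynomial.finset_sum_coeff, Polynomial.coeff_C_mul,
    Polynomial.coeff_X_pow, Polynomial.coeff_zero, mul_ite, mul_one, mul_zero] at hco
  rwa [Finset.sum_eq_single i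
    (fun j _ hj => if_neg (fun h => hj (Fin.val_injective h.symm)))
    (fun h => absurd (Finset.mem_univ i) h), if_pos rfl] at hco

end Aux

/-- If `p ∣ N` then `PRS(N, Δ_d)^⊥ = PRS(N, Δ_{N-1-d})`. -/
theorem PRS_dual (p q s N : ℕ) (hq : 1 < q) (hs : 0 < s)
    (F : Type) [Field F] [Fintype F] [DecidableEq F]
    (hF : Fintype.card F = q ^ s) (hp : ringChar F = p) (hN : 1 < N)
    (hdvd : (N - 1) ∣ (q ^ s - 1)) (hpN : p ∣ N) (d : ℕ) (hd : d ≤ N - 1) :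
    {w : ↥(XNset F N) → F | ∀ v ∈ PRS F N d, ∑ P, v P * w P = 0} =
      ↑(PRS F N (N - 1 - d)) := by
  classical
  obtain ⟨ζ, hζ⟩ := PRSaux.exists_prim hq hs hF hN hdvd
  set B : LinearMap.BilinForm F (↥(XNset F N) → F) :=
    LinearMap.mk₂ F (fun v w => ∑ P, v P * w P)
      (fun m m' n => by
        simp [Pi.add_apply, add_mul, Finset.sum_add_distrib])
      (fun c m n => by
        simp [Pi.smul_apply, smul_eq_mul, Finset.mul_sum, mul_assoc])
      (fun m n n' => by
        simp [Pi.add_apply, mul_add, Finset.sum_add_distrib])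
      (fun c m n => by
        simp [Pi.smul_apply, smul_eq_mul, Finset.mul_sum, mul_assoc, mul_left_comm])
    with hB
  have hBapp : ∀ v w : ↥(XNset F N) → F, B v w = ∑ P, v P * w P := fun v w => rfl
  have hflip : ∀ v w : ↥(XNset F N) → F, B.flip w v = ∑ P, v P * w P := fun v w => rfl
  have hsymm : ∀ v w : ↥(XNset F N) → F, B v w = B w v := by
    intro v w; simp only [hBapp, mul_comm]
  have hrefl : B.IsRefl := fun v w h => by rw [hsymm]; exact h
  have hnd : B.Nondegenerate := by
    refine (LinearMap.IsRefl.nondegenerate_iff_separatingLeft hrefl).mpr ?_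
    intro v hv
    funext P
    have h1 := hv (Pi.single P 1)
    rw [hBapp] at h1
    simpa [Pi.single_apply, mul_ite, Finset.sum_ite_eq'] using h1
  -- the key orthogonality inclusion
  have hle : PRS F N (N - 1 - d) ≤ B.orthogonal (PRS F N d) := by
    rw [PRS, Submodule.span_le]
    rintro w ⟨j, rfl⟩
    rw [SetLike.mem_coe, LinearMap.BilinForm.mem_orthogonal_iff]
    intro v hv
    have hker : PRS F N d ≤ LinearMap.ker (B.flip
        (fun P : ↥(XNset F N) =>
          (P : F × F).1 ^ (N - 1 - d - (j : ℕ)) * (P : F × F).2 ^ (j : ℕ))) := by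
      rw [PRS, Submodule.span_le]
      rintro v' ⟨i, rfl⟩
      simp only [SetLike.mem_coe, LinearMap.mem_ker]
      rw [hflip]
      have hi : (i : ℕ) ≤ d := by omega
      have hj : (j : ℕ) ≤ N - 1 - d := by omega
      have hsum : ∀ P : ↥(XNset F N),
          (P : F × F).1 ^ (d - (i : ℕ)) * (P : F × F).2 ^ (i : ℕ) *
            ((P : F × F).1 ^ (N - 1 - d - (j : ℕ)) * (P : F × F).2 ^ (j : ℕ))
          = (P : F × F).1 ^ (N - 1 - ((i : ℕ) + (j : ℕ))) *
            (P : F × F).2 ^ ((i : ℕ) + (j : ℕ)) := by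
        intro P
        rw [mul_mul_mul_comm, ← pow_add, ← pow_add]
        congr 2
        omega
      calc (∑ P : ↥(XNset F N),
            (P : F × F).1 ^ (d - (i : ℕ)) * (P : F × F).2 ^ (i : ℕ) *
              ((P : F × F).1 ^ (N - 1 - d - (j : ℕ)) * (P : F × F).2 ^ (j : ℕ)))
          = ∑ P : ↥(XNset F N), (P : F × F).1 ^ (N - 1 - ((i : ℕ) + (j : ℕ))) *
              (P : F × F).2 ^ ((i : ℕ) + (j : ℕ)) := by
            exact Finset.sum_congr rfl (fun P _ => hsum P)
        _ = ∑ P ∈ XNset F N, P.1 ^ (N - 1 - ((i : ℕ) + (j : ℕ)))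
              * P.2 ^ ((i : ℕ) + (j : ℕ)) := by
            exact Finset.sum_coe_sort (XNset F N)
              (fun P => P.1 ^ (N - 1 - ((i : ℕ) + (j : ℕ))) * P.2 ^ ((i : ℕ) + (j : ℕ)))
        _ = 0 := PRSaux.key_sum hp hpN hN hζ (by omega)
    have h2 := hker hv
    rw [LinearMap.mem_ker] at h2
    show B v _ = 0
    rw [hBapp]
    rw [hflip] at h2
    exact h2
  -- dimension count
  have hfinV : Module.finrank F (↥(XNset F N) → F) = N + 1 := by
    rw [Module.finrank_pi, Fintype.card_coe, PRSaux.card_XNset hN hζ]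
  have hrank : ∀ e : ℕ, e ≤ N - 1 → Module.finrank F (PRS F N e) = e + 1 := by
    intro e he
    rw [PRS, finrank_span_eq_card (PRSaux.linearIndependent hN hζ he), Fintype.card_fin]
  have heq : B.orthogonal (PRS F N d) = PRS F N (N - 1 - d) := by
    apply (Submodule.eq_of_le_of_finrank_le hle ?_).symm
    rw [LinearMap.BilinForm.finrank_orthogonal hnd, hfinV,
      hrank d hd, hrank (N - 1 - d) (by omega)]
    omega
  rw [← heq]
  ext w
  simp only [Set.mem_setOf_eq, SetLike.mem_coe,
    LinearMap.BilinForm.mem_orthogonal_iff, LinearMap.BilinForm.IsOrtho]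
  constructor
  · intro h v hv; rw [hBapp]; exact h v hv
  · intro h v hv; rw [← hBapp]; exact h v hv
end

section
/- Let $\mathbb{F}_{q^{2\ell}} \supseteq \mathbb{F}_q$ be finite fields, $\mathrm{Tr}_\ell(x) = \sum_{i=0}^{2\ell-1} x^{q^i}$, and let $X_{\mathrm{Tr}} = \{(1, \alpha) \mid \mathrm{Tr}_\ell(\alpha) = 0\} \cup \{(0,1)\} \subset \mathbb{F}_{q^{2\ell}}^2$. Then the vanishing ideal of $X_{\mathrm{Tr}}$ in $\mathbb{F}_{q^{2\ell}}[x_0, x_1]$ is generated by the four polynomials $x_0^2 - x_0$, $x_1^{q^{2\ell}} - x_1$, $(x_0 - 1)(x_1 - 1)$, and $x_0 \cdot \mathrm{Tr}_\ell(x_1)$. -/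
open MvPolynomial

lemma reduce1 {L : Type} [CommRing L] (f : MvPolynomial (Fin 2) L) :
    f - Polynomial.aeval (R := L) (X 1 : MvPolynomial (Fin 2) L)
          (MvPolynomial.aeval (R := L) ![0, Polynomial.X] f)
      - X 0 * Polynomial.aeval (R := L) (X 1 : MvPolynomial (Fin 2) L)
          (MvPolynomial.aeval (R := L) ![1, Polynomial.X] f
            - MvPolynomial.aeval (R := L) ![0, Polynomial.X] f)
    ∈ Ideal.span {(X 0 : MvPolynomial (Fin 2) L) ^ 2 - X 0} := by
  induction f using MvPolynomial.induction_on with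
  | C c =>
      simp [MvPolynomial.aeval_C]
  | add p q hp hq =>
      convert Ideal.add_mem _ hp hq using 1
      simp only [map_add, map_sub, map_neg]
      ring
  | mul_X p n hp =>
      fin_cases n <;> simp only [Fin.mk_zero, Fin.mk_one]
      · have key : p * X 0 - Polynomial.aeval (R := L) (X 1 : MvPolynomial (Fin 2) L)
              (MvPolynomial.aeval (R := L) ![0, Polynomial.X] (p * X 0))
            - X 0 * Polynomial.aeval (R := L) (X 1 : MvPolynomial (Fin 2) L)
              (MvPolynomial.aeval (R := L) ![1, Polynomial.X] (p * X 0)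
                - MvPolynomial.aeval (R := L) ![0, Polynomial.X] (p * X 0))
            = X 0 * (p - Polynomial.aeval (R := L) (X 1 : MvPolynomial (Fin 2) L)
              (MvPolynomial.aeval (R := L) ![0, Polynomial.X] p)
              - X 0 * Polynomial.aeval (R := L) (X 1 : MvPolynomial (Fin 2) L)
              (MvPolynomial.aeval (R := L) ![1, Polynomial.X] p
                - MvPolynomial.aeval (R := L) ![0, Polynomial.X] p))
              + ((X 0) ^ 2 - X 0) * Polynomial.aeval (R := L) (X 1 : MvPolynomial (Fin 2) L)
              (MvPolynomial.aeval (R := L) ![1, Polynomial.X] p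
                - MvPolynomial.aeval (R := L) ![0, Polynomial.X] p) := by
          simp only [map_mul, map_sub, MvPolynomial.aeval_X, Matrix.cons_val_zero,
            Matrix.cons_val_one, Matrix.head_cons, mul_zero, mul_one, map_zero, sub_zero]
          ring
        rw [key]
        exact Ideal.add_mem _ (Ideal.mul_mem_left _ _ hp)
          (Ideal.mul_mem_right _ _ (Ideal.subset_span rfl))
      · have key : p * X 1 - Polynomial.aeval (R := L) (X 1 : MvPolynomial (Fin 2) L)
              (MvPolynomial.aeval (R := L) ![0, Polynomial.X] (p * X 1))
            - X 0 * Polynomial.aeval (R := L) (X 1 : MvPolynomial (Fin 2) L)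
              (MvPolynomial.aeval (R := L) ![1, Polynomial.X] (p * X 1)
                - MvPolynomial.aeval (R := L) ![0, Polynomial.X] (p * X 1))
            = X 1 * (p - Polynomial.aeval (R := L) (X 1 : MvPolynomial (Fin 2) L)
              (MvPolynomial.aeval (R := L) ![0, Polynomial.X] p)
              - X 0 * Polynomial.aeval (R := L) (X 1 : MvPolynomial (Fin 2) L)
              (MvPolynomial.aeval (R := L) ![1, Polynomial.X] p
                - MvPolynomial.aeval (R := L) ![0, Polynomial.X] p)) := by
          simp only [map_mul, map_sub, MvPolynomial.aeval_X, Polynomial.aeval_X,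
            Matrix.cons_val_zero, Matrix.cons_val_one, Matrix.head_cons]
          ring
        rw [key]
        exact Ideal.mul_mem_left _ _ hp

section Trace
open Polynomial
lemma trace_dvd (p m ℓ q : ℕ) (hp : p.Prime) (hq : q = p ^ m)
    (hm : 0 < m) (hℓ : 0 < ℓ) (L : Type) [Field L] [Fintype L] [DecidableEq L]
    (hchar : ringChar L = p) (hL : Fintype.card L = q ^ (2 * ℓ)) :
    ∀ c : Polynomial L, (∀ α : L, (∑ i ∈ Finset.range (2 * ℓ), α ^ q ^ i) = 0 → c.eval α = 0) →
      (∑ i ∈ Finset.range (2 * ℓ), (Polynomial.X : Polynomial L) ^ q ^ i) ∣ c := by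
  haveI : CharP L p := hchar ▸ ringChar.charP L
  haveI : Fact p.Prime := ⟨hp⟩
  haveI : ExpChar L p := ExpChar.prime hp
  have hq1 : 1 < q := by
    subst hq; exact Nat.one_lt_pow hm.ne' hp.one_lt
  set n := 2 * ℓ with hn
  obtain ⟨k, hk⟩ : ∃ k, n = k + 1 := ⟨n - 1, by omega⟩
  set T : Polynomial L := ∑ i ∈ Finset.range n, (Polynomial.X : Polynomial L) ^ q ^ i with hT
  -- degree facts
  have hSdeg : (∑ i ∈ Finset.range k, (Polynomial.X : Polynomial L) ^ q ^ i).degree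
      < ((q ^ k : ℕ) : WithBot ℕ) := by
    refine lt_of_le_of_lt (Polynomial.degree_sum_le _ _) ?_
    rw [Finset.sup_lt_iff (by exact WithBot.bot_lt_coe _)]
    intro i hi
    rw [Polynomial.degree_X_pow]
    exact_mod_cast Nat.pow_lt_pow_right hq1 (Finset.mem_range.mp hi)
  have hTsplit : T = Polynomial.X ^ q ^ k + ∑ i ∈ Finset.range k, (Polynomial.X : Polynomial L) ^ q ^ i := by
    rw [hT, hk, Finset.sum_range_succ, add_comm]
  have hTmonic : T.Monic := by
    rw [hTsplit]
    exact (Polynomial.monic_X_pow _).add_of_left (by rwa [Polynomial.degree_X_pow])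
  have hT0 : T ≠ 0 := hTmonic.ne_zero
  have hTdeg : T.natDegree = q ^ k := by
    rw [hTsplit]
    have := Polynomial.degree_add_eq_left_of_degree_lt
      (p := (Polynomial.X : Polynomial L) ^ q ^ k)
      (q := ∑ i ∈ Finset.range k, (Polynomial.X : Polynomial L) ^ q ^ i)
      (by rwa [Polynomial.degree_X_pow])
    rw [Polynomial.natDegree, this, Polynomial.degree_X_pow]
    rfl
  have hevalT : ∀ x : L, T.eval x = ∑ i ∈ Finset.range n, x ^ q ^ i := by
    intro x; simp [hT, Polynomial.eval_finset_sum]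
  -- the kernel finset
  set K : Finset L := Finset.univ.filter (fun α => ∑ i ∈ Finset.range n, α ^ q ^ i = 0) with hK
  have hadd : ∀ a b : L, ∑ i ∈ Finset.range n, (a + b) ^ q ^ i
      = (∑ i ∈ Finset.range n, a ^ q ^ i) + ∑ i ∈ Finset.range n, b ^ q ^ i := by
    intro a b
    rw [← Finset.sum_add_distrib]
    refine Finset.sum_congr rfl fun i _ => ?_
    have h : q ^ i = p ^ (m * i) := by subst hq; rw [pow_mul]
    rw [h, add_pow_char_pow]
  set τ : L →+ L := AddMonoidHom.mk' (fun x => ∑ i ∈ Finset.range n, x ^ q ^ i) hadd with hτ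
  have hτapp : ∀ x : L, τ x = ∑ i ∈ Finset.range n, x ^ q ^ i := fun _ => rfl
  have hfix : ∀ x : L, (τ x) ^ q = τ x := by
    intro x
    rw [hτapp]
    have key : (∑ i ∈ Finset.range n, x ^ q ^ i) ^ q
        = ∑ i ∈ Finset.range n, (x ^ q ^ i) ^ q := by
      subst hq
      exact sum_pow_char_pow p m _ _
    rw [key]
    have h1 : ∀ i : ℕ, (x ^ q ^ i) ^ q = x ^ q ^ (i + 1) := by
      intro i; rw [← pow_mul, ← pow_succ]
    simp_rw [h1]
    have hxn : x ^ q ^ n = x := by rw [← hL]; exact FiniteField.pow_card x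
    have e1 := Finset.sum_range_succ' (fun i => x ^ q ^ i) n
    have e2 := Finset.sum_range_succ (fun i => x ^ q ^ i) n
    simp only [pow_zero, pow_one, hxn] at e1 e2
    have := e1.symm.trans e2
    exact add_right_cancel this
  -- fixed points of Frobenius
  have hZcard : (Finset.univ.filter (fun y : L => y ^ q = y)).card ≤ q := by
    set Z := Finset.univ.filter (fun y : L => y ^ q = y) with hZ
    have hmon : (Polynomial.X ^ q - Polynomial.X : Polynomial L).Monic := by
      refine (Polynomial.monic_X_pow _).sub_of_left ?_
      rw [Polynomial.degree_X_pow, Polynomial.degree_X]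
      exact_mod_cast hq1
    have hpoly : (Polynomial.X ^ q - Polynomial.X : Polynomial L) ≠ 0 := hmon.ne_zero
    have hsub : Z.val ⊆ (Polynomial.X ^ q - Polynomial.X : Polynomial L).roots := by
      intro y hy
      rw [Polynomial.mem_roots hpoly]
      have hy2 := Finset.mem_filter.mp hy
      simp [Polynomial.IsRoot, hy2.2, sub_eq_zero]
    have hdeg : (Polynomial.X ^ q - Polynomial.X : Polynomial L).natDegree = q := by
      have h := Polynomial.degree_sub_eq_left_of_degree_lt
        (p := (Polynomial.X : Polynomial L) ^ q) (q := (Polynomial.X : Polynomial L))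
        (by rw [Polynomial.degree_X_pow, Polynomial.degree_X]; exact_mod_cast hq1)
      rw [Polynomial.natDegree, h, Polynomial.degree_X_pow]
      rfl
    calc Z.card ≤ Multiset.card (Polynomial.X ^ q - Polynomial.X : Polynomial L).roots :=
          Multiset.card_le_card (Finset.val_le_iff_val_subset.2 hsub)
      _ ≤ (Polynomial.X ^ q - Polynomial.X : Polynomial L).natDegree := Polynomial.card_roots' _
      _ = q := hdeg
  have hrange : Nat.card τ.range ≤ q := by
    set Z := Finset.univ.filter (fun y : L => y ^ q = y) with hZ
    have hinj : Function.Injective (fun y : τ.range => (⟨y.1, by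
        rcases y with ⟨y, hy⟩
        obtain ⟨x, rfl⟩ := AddMonoidHom.mem_range.mp hy
        exact Finset.mem_filter.mpr ⟨Finset.mem_univ _, hfix x⟩⟩ : {z : L // z ∈ Z})) := by
      intro a b hab
      simp only [Subtype.mk.injEq] at hab
      exact Subtype.ext hab
    calc Nat.card τ.range = Fintype.card τ.range := Nat.card_eq_fintype_card
      _ ≤ Fintype.card {z : L // z ∈ Z} := Fintype.card_le_of_injective _ hinj
      _ = Z.card := Fintype.card_coe Z
      _ ≤ q := hZcard
  have hker : Nat.card τ.ker = K.card := by
    have e : {x : L // x ∈ τ.ker} ≃ {x : L // x ∈ K} :=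
      Equiv.subtypeEquivRight (fun x => by
        rw [AddMonoidHom.mem_ker, hτapp x, hK, Finset.mem_filter]
        exact ⟨fun h => ⟨Finset.mem_univ x, h⟩, fun h => h.2⟩)
    rw [Nat.card_congr e, Nat.card_eq_fintype_card, Fintype.card_coe]
  have hKge : q ^ k ≤ K.card := by
    have hcount : q ^ n = Nat.card (L ⧸ τ.ker) * Nat.card τ.ker := by
      rw [← AddSubgroup.card_eq_card_quotient_mul_card_addSubgroup, Nat.card_eq_fintype_card, hL]
    have hquot : Nat.card (L ⧸ τ.ker) = Nat.card τ.range :=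
      Nat.card_congr (QuotientAddGroup.quotientKerEquivRange τ).toEquiv
    have h1 : q ^ n ≤ q * K.card := by
      rw [hcount, hquot, ← hker]
      exact Nat.mul_le_mul hrange le_rfl
    have h2 : q * q ^ k ≤ q * K.card := by
      rw [← pow_succ', ← hk]; exact h1
    exact Nat.le_of_mul_le_mul_left h2 (by omega)
  -- T equals the product over K
  have hKsub : K.val ⊆ T.roots := by
    intro α hα
    rw [Polynomial.mem_roots hT0]
    have hmem := Finset.mem_filter.mp hα
    rw [Polynomial.IsRoot, hevalT]
    exact hmem.2
  have hPdvd : (∏ α ∈ K, (Polynomial.X - Polynomial.C α)) ∣ T := by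
    have h := (Multiset.prod_X_sub_C_dvd_iff_le_roots hT0 K.val).mpr
      (Finset.val_le_iff_val_subset.mpr hKsub)
    rwa [← Finset.prod_eq_multiset_prod] at h
  have hPmonic : (∏ α ∈ K, (Polynomial.X - Polynomial.C α)).Monic :=
    Polynomial.monic_prod_of_monic _ _ fun α _ => Polynomial.monic_X_sub_C α
  have hPdeg : (∏ α ∈ K, (Polynomial.X - Polynomial.C α)).natDegree = K.card := by
    rw [Polynomial.natDegree_prod_of_monic _ _ fun α _ => Polynomial.monic_X_sub_C α]
    simp
  have hTP : T = ∏ α ∈ K, (Polynomial.X - Polynomial.C α) :=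
    Polynomial.eq_of_monic_of_dvd_of_natDegree_le hPmonic hTmonic hPdvd
      (by rw [hTdeg, hPdeg]; exact hKge)
  -- conclusion
  intro c hc
  rcases eq_or_ne c 0 with rfl | hc0
  · exact dvd_zero _
  rw [hTP]
  have hKsubc : K.val ⊆ c.roots := by
    intro α hα
    rw [Polynomial.mem_roots hc0]
    have hmem := Finset.mem_filter.mp hα
    exact hc α hmem.2
  have h := (Multiset.prod_X_sub_C_dvd_iff_le_roots hc0 K.val).mpr
    (Finset.val_le_iff_val_subset.mpr hKsubc)
  rwa [← Finset.prod_eq_multiset_prod] at h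

end Trace

lemma eval_comp0 {L : Type} [CommRing L] (v : L) (g : MvPolynomial (Fin 2) L) :
    Polynomial.eval v (MvPolynomial.aeval (R := L) ![0, Polynomial.X] g)
      = MvPolynomial.eval ![0, v] g := by
  rw [← Polynomial.coe_aeval_eq_eval, MvPolynomial.comp_aeval_apply]
  have h : (fun i => Polynomial.aeval (R := L) v (![0, Polynomial.X] i)) = ![0, v] := by
    funext i; fin_cases i <;> simp
  rw [h]
  rfl

lemma eval_comp1 {L : Type} [CommRing L] (v : L) (g : MvPolynomial (Fin 2) L) :
    Polynomial.eval v (MvPolynomial.aeval (R := L) ![1, Polynomial.X] g)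
      = MvPolynomial.eval ![1, v] g := by
  rw [← Polynomial.coe_aeval_eq_eval, MvPolynomial.comp_aeval_apply]
  have h : (fun i => Polynomial.aeval (R := L) v (![1, Polynomial.X] i)) = ![1, v] := by
    funext i; fin_cases i <;> simp
  rw [h]
  rfl

/-- The vanishing ideal of
`X_Tr = {(1, α) | Tr_ℓ(α) = 0} ∪ {(0, 1)}` is generated by `x₀² - x₀`,
`x₁^{q^{2ℓ}} - x₁`, `(x₀ - 1)(x₁ - 1)` and `x₀ · Tr_ℓ(x₁)`. -/
theorem vanishing_ideal_trace_roots (p m ℓ q : ℕ) (hp : p.Prime) (hq : q = p ^ m)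
    (hm : 0 < m) (hℓ : 0 < ℓ) (L : Type) [Field L] [Fintype L] [DecidableEq L]
    (hchar : ringChar L = p) (hL : Fintype.card L = q ^ (2 * ℓ))
    (f : MvPolynomial (Fin 2) L) :
    (∀ P : L × L,
        ((P.1 = 1 ∧ ∑ i ∈ Finset.range (2 * ℓ), P.2 ^ q ^ i = 0) ∨ P = (0, 1)) →
        MvPolynomial.eval ![P.1, P.2] f = 0) ↔
      f ∈ Ideal.span
        ({(X 0) ^ 2 - X 0, (X 1) ^ (q ^ (2 * ℓ)) - X 1, (X 0 - 1) * (X 1 - 1),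
          X 0 * ∑ i ∈ Finset.range (2 * ℓ), (X 1) ^ q ^ i} :
          Set (MvPolynomial (Fin 2) L)) := by
  constructor
  · -- forward direction
    intro H
    set ι : Polynomial L →ₐ[L] MvPolynomial (Fin 2) L := Polynomial.aeval (R := L) (X 1) with hι
    set a : Polynomial L := MvPolynomial.aeval (R := L) ![0, Polynomial.X] f with ha
    set cp : Polynomial L := MvPolynomial.aeval (R := L) ![1, Polynomial.X] f with hc
    have hred := reduce1 f
    have ha1 : a.eval 1 = 0 := by
      rw [ha, eval_comp0]
      exact H (0, 1) (Or.inr rfl)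
    have hcα : ∀ α : L, (∑ i ∈ Finset.range (2 * ℓ), α ^ q ^ i) = 0 → cp.eval α = 0 := by
      intro α hα
      rw [hc, eval_comp1]
      exact H (1, α) (Or.inl ⟨rfl, hα⟩)
    obtain ⟨a₁, ha₁⟩ : (Polynomial.X - Polynomial.C 1) ∣ a := Polynomial.dvd_iff_isRoot.mpr ha1
    obtain ⟨u, hu⟩ := trace_dvd p m ℓ q hp hq hm hℓ L hchar hL cp hcα
    have e1 : ι a = (X 1 - 1) * ι a₁ := by
      rw [ha₁]
      simp [hι, map_mul, map_sub]
    have e2 : ι cp = (∑ i ∈ Finset.range (2 * ℓ), (X 1 : MvPolynomial (Fin 2) L) ^ q ^ i) * ι u := by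
      rw [hu]
      simp [hι, map_mul, map_sum, map_pow]
    have key : f = (f - ι a - X 0 * ι (cp - a))
        + (-(ι a₁)) * ((X 0 - 1) * (X 1 - 1))
        + (ι u) * (X 0 * ∑ i ∈ Finset.range (2 * ℓ), (X 1 : MvPolynomial (Fin 2) L) ^ q ^ i) := by
      rw [map_sub, e1, e2]
      ring
    rw [key]
    refine add_mem (add_mem ?_ ?_) ?_
    · exact Ideal.span_mono (Set.singleton_subset_iff.mpr (Set.mem_insert _ _)) hred
    · exact Ideal.mul_mem_left _ _ (Ideal.subset_span (by simp))
    · exact Ideal.mul_mem_left _ _ (Ideal.subset_span (by simp))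
  · -- backward direction
    intro hf P hP
    induction hf using Submodule.span_induction with
    | mem g hg =>
        have hcard : P.2 ^ q ^ (2 * ℓ) = P.2 := by rw [← hL]; exact FiniteField.pow_card _
        simp only [Set.mem_insert_iff, Set.mem_singleton_iff] at hg
        rcases hP with ⟨h1, h2⟩ | hP01
        · rcases hg with rfl | rfl | rfl | rfl
          · simp [h1]
          · simp [hcard]
          · simp [h1]
          · simp [map_sum, h1, h2]
        · rcases hg with rfl | rfl | rfl | rfl <;>
            simp [hP01]
    | zero => simp
    | add x y _ _ hx hy => simp [hx, hy]
    | smul r x _ hx => simp [smul_eq_mul, hx]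
end
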